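/- Complementarity of a pair of strings is symmetric in the two strings: a pair (A, B) of integer strings is complementary if and only if the pair (B, A) is complementary. -/

import Mathlib

/-- A 2-final expansion of a pair of integer strings: it transforms
`((a₁,…,aₙ),(b₁,…,bₘ))` into either `((a₁+1,a₂,…,aₙ),(b₁,…,bₘ,2))` or
`((2,a₁,…,aₙ),(b₁,…,bₘ₋₁,bₘ+1))`. -/
def TwoFinalExp : List ℤ × List ℤ → List ℤ × List ℤ → Prop := fun P Q =>
  (∃ (a : ℤ) (A B : List ℤ), P = (a :: A, B) ∧ Q = ((a + 1) :: A, B ++ [2])) ∨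
  (∃ (A B : List ℤ) (b : ℤ), P = (A, B ++ [b]) ∧ Q = (2 :: A, B ++ [b + 1]))

/-- A pair of integer strings is complementary if it is obtained from the pair
`((2),(2))` by a finite (possibly empty) sequence of 2-final expansions. -/
def Complementary (A B : List ℤ) : Prop :=
  Relation.ReflTransGen TwoFinalExp ([2], [2]) (A, B)

/-- A 2-initial expansion (acting on the other ends of the strings). -/
def UStep : List ℤ × List ℤ → List ℤ × List ℤ → Prop := fun P Q =>
  (∃ (A : List ℤ) (b : ℤ) (B : List ℤ), P = (A, b :: B) ∧ Q = (A ++ [2], (b + 1) :: B)) ∨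
  (∃ (C : List ℤ) (c : ℤ) (B : List ℤ), P = (C ++ [c], B) ∧ Q = (C ++ [c + 1], 2 :: B))

abbrev CompP (P : List ℤ × List ℤ) : Prop :=
  Relation.ReflTransGen TwoFinalExp ([2], [2]) P

lemma compP_ne_nil {P : List ℤ × List ℤ} (h : CompP P) : P.1 ≠ [] ∧ P.2 ≠ [] := by
  induction h with
  | refl => simp
  | tail h₀ hs ih =>
    rcases hs with ⟨a, A, B, rfl, rfl⟩ | ⟨A, B, b, rfl, rfl⟩ <;> simp

lemma compP_ustep {P : List ℤ × List ℤ} (h : CompP P) :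
    ∀ Q, UStep P Q → CompP Q := by
  induction h with
  | refl =>
    intro Q hU
    rcases hU with ⟨A, b, B, hP, rfl⟩ | ⟨C, c, B, hP, rfl⟩
    · injection hP with h1 h2
      subst h1
      injection h2 with h3 h4
      subst h3; subst h4
      refine Relation.ReflTransGen.single (Or.inr ⟨[2], [], 2, by simp, by norm_num⟩)
    · -- [2] = C ++ [c]
      injection hP with h1 h2
      subst h2
      rcases C with _ | ⟨c₀, C₁⟩
      · simp only [List.nil_append, List.cons.injEq] at h1
        obtain ⟨rfl, -⟩ := h1
        refine Relation.ReflTransGen.single (Or.inl ⟨2, [], [2], by simp, by norm_num⟩)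
      · simp only [List.cons_append, List.cons.injEq] at h1
        exact absurd h1.2 (by simp)
  | tail h₀ hs ih =>
    intro Q hU
    have hne := compP_ne_nil h₀
    rcases hs with ⟨a, A, B, rfl, rfl⟩ | ⟨A, B, b, rfl, rfl⟩
    · -- s1 : (a::A, B) → ((a+1)::A, B++[2])
      rcases hU with ⟨A', b', B', hP, rfl⟩ | ⟨C, c, B'', hP, rfl⟩
      · -- u1 on ((a+1)::A, B++[2])
        injection hP with h1 h2
        subst h1
        rcases B with _ | ⟨b₀, B₁⟩
        · exact absurd rfl hne.2
        · injection h2 with h3 h4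
          subst h3; subst h4
          have hQ₀ : CompP ((a :: A) ++ [2], (b₀ + 1) :: B₁) :=
            ih _ (Or.inl ⟨a :: A, b₀, B₁, by simp, by simp⟩)
          exact hQ₀.tail (Or.inl ⟨a, A ++ [2], (b₀ + 1) :: B₁, by simp, by simp⟩)
      · -- u2 on ((a+1)::A, B++[2]) : (a+1)::A = C++[c]
        injection hP with h1 h2
        subst h2
        rcases C with _ | ⟨c₀, C₁⟩
        · simp at h1
          obtain ⟨hc, rfl⟩ := h1
          subst hc
          have hQ₀ : CompP (([] : List ℤ) ++ [a + 1], 2 :: B) :=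
            ih _ (Or.inr ⟨[], a, B, by simp, by simp⟩)
          exact hQ₀.tail (Or.inl ⟨a + 1, [], 2 :: B, by simp, by simp⟩)
        · injection h1 with h3 h4
          subst h3; subst h4
          have hQ₀ : CompP ((a :: C₁) ++ [c + 1], 2 :: B) :=
            ih _ (Or.inr ⟨a :: C₁, c, B, by simp, by simp⟩)
          exact hQ₀.tail (Or.inl ⟨a, C₁ ++ [c + 1], 2 :: B, by simp, by simp⟩)
    · -- s2 : (A, B++[b]) → (2::A, B++[b+1])
      rcases hU with ⟨A', b', B', hP, rfl⟩ | ⟨C, c, B'', hP, rfl⟩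
      · -- u1 : B++[b+1] = b'::B'
        injection hP with h1 h2
        subst h1
        rcases B with _ | ⟨b₀, B₁⟩
        · simp at h2
          obtain ⟨h3, h4⟩ := h2
          subst h3; subst h4
          have hQ₀ : CompP (A ++ [2], (b + 1) :: ([] : List ℤ)) :=
            ih _ (Or.inl ⟨A, b, [], by simp, by simp⟩)
          exact hQ₀.tail (Or.inr ⟨A ++ [2], [], b + 1, by simp, by simp⟩)
        · injection h2 with h3 h4
          subst h3; subst h4
          have hQ₀ : CompP (A ++ [2], (b₀ + 1) :: (B₁ ++ [b])) :=
            ih _ (Or.inl ⟨A, b₀, B₁ ++ [b], by simp, by simp⟩)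
          exact hQ₀.tail (Or.inr ⟨A ++ [2], (b₀ + 1) :: B₁, b, by simp, by simp⟩)
      · -- u2 : 2::A = C++[c]
        injection hP with h1 h2
        subst h2
        rcases C with _ | ⟨c₀, C₁⟩
        · simp at h1
          obtain ⟨_, rfl⟩ := h1
          exact absurd rfl hne.1
        · injection h1 with h3 h4
          subst h3; subst h4
          have hQ₀ : CompP (C₁ ++ [c + 1], 2 :: (B ++ [b])) :=
            ih _ (Or.inr ⟨C₁, c, B ++ [b], by simp, by simp⟩)
          exact hQ₀.tail (Or.inr ⟨C₁ ++ [c + 1], 2 :: B, b, by simp, by simp⟩)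

/-- Reversing both strings preserves complementarity. -/
lemma compP_rev {P : List ℤ × List ℤ} (h : CompP P) :
    CompP (P.1.reverse, P.2.reverse) := by
  induction h with
  | refl => exact Relation.ReflTransGen.refl
  | tail h₀ hs ih =>
    rcases hs with ⟨a, A, B, rfl, rfl⟩ | ⟨A, B, b, rfl, rfl⟩
    · exact compP_ustep ih _ (Or.inr ⟨A.reverse, a, B.reverse, by simp, by simp⟩)
    · exact compP_ustep ih _ (Or.inl ⟨A.reverse, b, B.reverse, by simp, by simp⟩)

/-- Swapping and reversing preserves complementarity. -/
lemma compP_swap_rev {P : List ℤ × List ℤ} (h : CompP P) :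
    CompP (P.2.reverse, P.1.reverse) := by
  induction h with
  | refl => exact Relation.ReflTransGen.refl
  | tail h₀ hs ih =>
    rcases hs with ⟨a, A, B, rfl, rfl⟩ | ⟨A, B, b, rfl, rfl⟩
    · exact ih.tail (Or.inr ⟨B.reverse, A.reverse, a, by simp, by simp⟩)
    · exact ih.tail (Or.inl ⟨b, B.reverse, A.reverse, by simp, by simp⟩)

lemma compP_swap {A B : List ℤ} (h : Complementary A B) : Complementary B A := by
  have h1 := compP_swap_rev (P := (A, B)) h
  have h2 := compP_rev h1
  exact (by simpa using h2 : CompP (B, A))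

/-- Complementarity is symmetric in the two strings. -/
theorem stmt2 (A B : List ℤ) : Complementary A B ↔ Complementary B A :=
  ⟨compP_swap, compP_swap⟩
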